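/- Suppose the resources' payoffs are long-tailed: for all k ≠ k', either μ_k/μ_{k'} > N_0/ε_0 or μ_{k'}/μ_k > N_0/ε_0, where N_0 = max_k |{j : w_{j,k} > 0}| and ε_0 = min of the positive weights w_{j,k}. Then the PPA-Game admits a pure Nash equilibrium. -/

import Mathlib

open Finset

/-- Total weight on resource `k` under profile `π`. -/
noncomputable def Wt {N K : ℕ} (w : Fin N → Fin K → ℝ) (π : Fin N → Fin K) (k : Fin K) : ℝ :=
  ∑ j : Fin N, if π j = k then w j k else 0

/-- Utility of player `j` in the PPA-Game. -/
noncomputable def U {N K : ℕ} (μ : Fin K → ℝ) (w : Fin N → Fin K → ℝ)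
    (π : Fin N → Fin K) (j : Fin N) : ℝ :=
  if 0 < Wt w π (π j) then μ (π j) * w j (π j) / Wt w π (π j) else 0

/-- Pure Nash equilibrium of the PPA-Game. -/
def IsPNE {N K : ℕ} (μ : Fin K → ℝ) (w : Fin N → Fin K → ℝ) (π : Fin N → Fin K) : Prop :=
  ∀ j : Fin N, ∀ k' : Fin K, U μ w (Function.update π j k') j ≤ U μ w π j

open scoped Classical in
/-- long-tailed payoffs guarantee the existence of a PNE. -/
theorem stmt6 {N K : ℕ} (hN : 2 ≤ N) (hK : 2 ≤ K)
    (μ : Fin K → ℝ) (w : Fin N → Fin K → ℝ)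
    (hμ : ∀ k, 0 < μ k ∧ μ k ≤ 1) (hw : ∀ j k, 0 ≤ w j k ∧ w j k ≤ 1)
    (hpos : ∀ k : Fin K, ∃ j : Fin N, 0 < w j k)
    (N0 : ℕ) (hN0 : N0 = Finset.univ.sup fun k : Fin K =>
      (Finset.univ.filter fun j : Fin N => 0 < w j k).card)
    (ε0 : ℝ) (hε0pos : 0 < ε0)
    (hε0min : ∀ j k, 0 < w j k → ε0 ≤ w j k)
    (hε0mem : ∃ j k, 0 < w j k ∧ w j k = ε0)
    (hlong : ∀ k k' : Fin K, k ≠ k' →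
      μ k / μ k' > (N0 : ℝ) / ε0 ∨ μ k' / μ k > (N0 : ℝ) / ε0) :
    ∃ π : Fin N → Fin K, IsPNE μ w π := by

  classical
  have hK0 : 0 < K := by omega
  -- construct the profile: each player picks their best supported resource
  have key : ∀ j : Fin N, ∃ k : Fin K,
      (∃ k0, 0 < w j k0) → 0 < w j k ∧ ∀ k', 0 < w j k' → μ k' ≤ μ k := by
    intro j
    by_cases h : ∃ k0, 0 < w j k0
    · obtain ⟨k0, hk0⟩ := h
      obtain ⟨k, hk, hmax⟩ :=
        Finset.exists_max_image (Finset.univ.filter fun k => 0 < w j k) μ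
          ⟨k0, by simpa using hk0⟩
      exact ⟨k, fun _ => ⟨by simpa using hk, fun k' h' => hmax k' (by simpa using h')⟩⟩
    · exact ⟨⟨0, hK0⟩, fun h' => absurd h' h⟩
  choose π hπ using key
  refine ⟨π, ?_⟩
  have hwnn : ∀ j k, 0 ≤ w j k := fun j k => (hw j k).1
  have hle_Wt : ∀ (σ : Fin N → Fin K) (j : Fin N), w j (σ j) ≤ Wt w σ (σ j) := by
    intro σ j
    have := Finset.single_le_sum (f := fun i => if σ i = σ j then w i (σ j) else 0)
      (fun i _ => by split_ifs with h; exacts [hwnn i (σ j), le_rfl])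
      (Finset.mem_univ j)
    simpa [Wt] using this
  have hN0pos : 0 < N0 := by
    obtain ⟨j0, hj0⟩ := hpos ⟨0, hK0⟩
    have h1 : 1 ≤ (Finset.univ.filter fun j : Fin N => 0 < w j ⟨0, hK0⟩).card :=
      Finset.card_pos.mpr ⟨j0, by simpa using hj0⟩
    have h2 : (Finset.univ.filter fun j : Fin N => 0 < w j ⟨0, hK0⟩).card ≤ N0 := by
      rw [hN0]
      exact Finset.le_sup (f := fun k : Fin K =>
        (Finset.univ.filter fun j : Fin N => 0 < w j k).card) (Finset.mem_univ _)
    omega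
  have hN0R : (0:ℝ) < (N0:ℝ) := by exact_mod_cast hN0pos
  have hε0le1 : ε0 ≤ 1 := by
    obtain ⟨j, k, hp, he⟩ := hε0mem
    exact he ▸ (hw j k).2
  have hWt_le : ∀ (σ : Fin N → Fin K) (k : Fin K), Wt w σ k ≤ (N0 : ℝ) := by
    intro σ k
    have h1 : Wt w σ k ≤ ((Finset.univ.filter fun j : Fin N => 0 < w j k).card : ℝ) := by
      unfold Wt
      calc ∑ i : Fin N, (if σ i = k then w i k else 0)
          ≤ ∑ i : Fin N, (if 0 < w i k then (1:ℝ) else 0) := by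
            apply Finset.sum_le_sum
            intro i _
            split_ifs with h1 h2 h2
            · exact (hw i k).2
            · exact le_of_not_gt h2
            · norm_num
            · exact le_rfl
        _ = _ := by simp [Finset.sum_boole]
    have h2 : ((Finset.univ.filter fun j : Fin N => 0 < w j k).card : ℝ) ≤ (N0 : ℝ) := by
      have h3 : (Finset.univ.filter fun j : Fin N => 0 < w j k).card ≤ N0 := by
        rw [hN0]
        exact Finset.le_sup (f := fun k : Fin K =>
          (Finset.univ.filter fun j : Fin N => 0 < w j k).card) (Finset.mem_univ k)
      exact_mod_cast h3
    linarith
  intro j k'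
  by_cases hz : ∃ k0, 0 < w j k0
  · -- player j has some positive weight
    obtain ⟨hwj, hmax⟩ := hπ j hz
    have hWpos : 0 < Wt w π (π j) := lt_of_lt_of_le hwj (hle_Wt π j)
    have hUj : U μ w π j = μ (π j) * w j (π j) / Wt w π (π j) := by
      unfold U; rw [if_pos hWpos]
    have hUlow : μ (π j) * ε0 / (N0:ℝ) ≤ U μ w π j := by
      rw [hUj]
      apply div_le_div₀ (mul_nonneg (le_of_lt (hμ (π j)).1) (hwnn j (π j)))
        (mul_le_mul_of_nonneg_left (hε0min j (π j) hwj) (le_of_lt (hμ (π j)).1))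
        hWpos (hWt_le π (π j))
    by_cases hkk : k' = π j
    · rw [hkk, Function.update_eq_self]
    · set σ := Function.update π j k' with hσ
      have hσj : σ j = k' := Function.update_self j k' π
      by_cases hwk' : 0 < w j k'
      · -- utility after deviating is at most μ k'
        have hW' : 0 < Wt w σ (σ j) := by
          have := hle_Wt σ j
          rw [hσj] at this ⊢
          exact lt_of_lt_of_le hwk' this
        have hU' : U μ w σ j ≤ μ k' := by
          unfold U
          rw [if_pos hW', hσj, div_le_iff₀ (by rwa [hσj] at hW')]
          have h1 : w j k' ≤ Wt w σ k' := by
            have := hle_Wt σ j; rwa [hσj] at this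
          nlinarith [mul_le_mul_of_nonneg_left h1 (le_of_lt (hμ k').1)]
        have hne : π j ≠ k' := fun h => hkk h.symm
        rcases hlong (π j) k' hne with h | h
        · -- μ (π j) / μ k' > N0/ε0 : deviating is bad
          have hcross : (N0:ℝ) * μ k' < μ (π j) * ε0 := by
            rw [gt_iff_lt, div_lt_div_iff₀ hε0pos (hμ k').1] at h
            exact h
          have h2 : μ k' < μ (π j) * ε0 / (N0:ℝ) := by
            rw [lt_div_iff₀ hN0R]
            nlinarith
          linarith
        · -- other direction contradicts maximality
          exfalso
          have hratio : (1:ℝ) ≤ (N0:ℝ) / ε0 := by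
            rw [le_div_iff₀ hε0pos]
            have : (1:ℝ) ≤ (N0:ℝ) := by exact_mod_cast hN0pos
            linarith
          have h1 : (1:ℝ) < μ k' / μ (π j) := lt_of_le_of_lt hratio h
          have h2 : μ (π j) < μ k' := (one_lt_div (hμ (π j)).1).mp h1
          have h3 : μ k' ≤ μ (π j) := hmax k' hwk'
          linarith
      · -- w j k' = 0: deviating gives 0
        have hw0 : w j k' = 0 := le_antisymm (le_of_not_gt hwk') (hwnn j k')
        have hU0 : U μ w σ j = 0 := by
          unfold U
          rw [hσj, hw0]
          split_ifs <;> simp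
        rw [hU0]
        calc (0:ℝ) ≤ μ (π j) * ε0 / (N0:ℝ) :=
              div_nonneg (mul_nonneg (le_of_lt (hμ (π j)).1) hε0pos.le) hN0R.le
          _ ≤ _ := hUlow
  · -- player j has zero weight everywhere: utility always 0
    push_neg at hz
    have hz' : ∀ k, w j k = 0 := fun k => le_antisymm (le_of_not_gt (by
      simpa using hz k)) (hwnn j k)
    have hU : ∀ σ : Fin N → Fin K, U μ w σ j = 0 := by
      intro σ
      unfold U
      rw [hz' (σ j)]
      split_ifs <;> simp
    rw [hU, hU]
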